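/- Let Γ be a connected graph and let D, E ∈ ℝ^{Vert(Γ)} be zero-sum vectors, and denote by g(Γ, ·; D, E) the extended Green's function on ℝ_{≥0}^{Ed(Γ)} (defined on improper resistances via contraction of the zero-resistance edges). Then: (i) g(Γ, a·μ; D, E) = a · g(Γ, μ; D, E) for all a ∈ ℝ_{≥0} and μ ∈ ℝ_{≥0}^{Ed(Γ)}; (ii) g(Γ, Σ_{i=1}^n μ_i; D, D) ≥ Σ_{i=1}^n g(Γ, μ_i; D, D) for all μ₁, …, μ_n ∈ ℝ_{≥0}^{Ed(Γ)}; (iii) if μ, μ' ∈ ℝ_{≥0}^{Ed(Γ)} satisfy μ(e) ≤ μ'(e) for all edges e, then g(Γ, μ; D, D) ≤ g(Γ, μ'; D, D), and if moreover equality holds and μ' is proper, then for each edge e : i → j either μ(e) = μ'(e) or no current flows along e in (Γ, μ'), i.e. v'_i = v'_j for v' with L_{μ'} v' = D. -/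

import Mathlib

open Classical
open scoped BigOperators

/-- A graph: a finite set of vertices, a finite set of edges, and a map assigning to
each edge its unordered pair of endpoints (loops and parallel edges allowed). -/
structure Graph' where
  V : Type
  E : Type
  [fintV : Fintype V]
  [decV : DecidableEq V]
  [fintE : Fintype E]
  [decE : DecidableEq E]
  ends : E → Sym2 V

attribute [instance] Graph'.fintV Graph'.decV Graph'.fintE Graph'.decE

namespace Graph'

variable (G : Graph')

/-- The Laplacian of the resistive network `(G, μ)` applied to a voltage assignment `v`:
`(L v) i = Σ_j Σ_{edges e : i → j} (v i − v j) / μ e`. -/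
noncomputable def lap (μ : G.E → ℝ) (v : G.V → ℝ) : G.V → ℝ := fun i =>
  ∑ j : G.V, ∑ e : G.E, if G.ends e = s(i, j) then (v i - v j) / μ e else 0

/-- `i` and `j` are joined by an edge belonging to `F`. -/
def Adj (F : Set G.E) (i j : G.V) : Prop := ∃ e ∈ F, G.ends e = s(i, j)

/-- `i` and `j` lie in the same connected component of the subgraph `Γ|_F`
(the subgraph with all vertices of `Γ` and edge set `F`). -/
def Reach (F : Set G.E) (i j : G.V) : Prop := Relation.EqvGen (G.Adj F) i j

/-- The subgraph `Γ|_F` is connected. -/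
def ConnOn (F : Set G.E) : Prop := ∀ i j : G.V, G.Reach F i j

/-- The graph `G` is connected. -/
def Connected : Prop := G.ConnOn Set.univ

/-- The set of connected components of the subgraph `Γ|_F`. -/
def Comp (F : Set G.E) : Type := Quotient (Relation.EqvGen.setoid (G.Adj F))

/-- A walk from `i` to `j`: a finite sequence of vertices together with a choice of an
edge from each vertex to the next. -/
inductive Walk : G.V → G.V → Type
  | nil (i : G.V) : Walk i i
  | cons {i j k : G.V} (e : G.E) (he : G.ends e = s(i, j)) (w : Walk j k) : Walk i k

namespace Walk

variable {G}

/-- The list of vertices visited by a walk, in order (starting vertex first). -/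
def vertices : ∀ {i j : G.V}, G.Walk i j → List G.V
  | _, _, .nil a => [a]
  | _, _, @Walk.cons _ a _ _ _ _ w => a :: vertices w

/-- The list of edges traversed by a walk, in order. -/
def edges : ∀ {i j : G.V}, G.Walk i j → List G.E
  | _, _, .nil _ => []
  | _, _, .cons e _ w => e :: edges w

/-- The list of steps `(source, edge, target)` of a walk. -/
def steps : ∀ {i j : G.V}, G.Walk i j → List (G.V × G.E × G.V)
  | _, _, .nil _ => []
  | _, _, @Walk.cons _ a b _ e _ w => (a, e, b) :: steps w

/-- All edges of the walk lie in the edge set `F`. -/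
def In {i j : G.V} (w : G.Walk i j) (F : Set G.E) : Prop := ∀ e ∈ w.edges, e ∈ F

/-- A path: a walk all of whose vertices are distinct, except possibly the start and the
end vertex (and which does not traverse any edge twice). -/
def IsPath {i j : G.V} (w : G.Walk i j) : Prop :=
  w.vertices.dropLast.Nodup ∧ w.vertices.tail.Nodup ∧ w.edges.Nodup

/-- Change the (definitionally equal) endpoints of a walk. -/
def copy : ∀ {i j i' j' : G.V}, G.Walk i j → i = i' → j = j' → G.Walk i' j'
  | _, _, _, _, w, rfl, rfl => w

variable (G)

end Walk

/-- `F` is cycle-free: the subgraph `Γ|_F` contains no cycle, i.e. every closed path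
with edges in `F` is trivial. -/
def CycleFree (F : Set G.E) : Prop :=
  ∀ (i : G.V) (w : G.Walk i i), w.In F → w.IsPath → w.edges = []

/-- `T` is a spanning tree of `G`: the subgraph `Γ|_T` is connected and cycle-free. -/
def IsSpanningTree (T : Set G.E) : Prop := G.ConnOn T ∧ G.CycleFree T

/-- `F` is a 2-forest: `Γ|_F` is cycle-free with exactly two connected components. -/
def IsTwoForest (F : Set G.E) : Prop := G.CycleFree F ∧ Nat.card (G.Comp F) = 2

/-- `M` is a maximal forest of the subgraph `Γ|_S`: it is a cycle-free subset of `S`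
containing a spanning tree of each connected component of `Γ|_S` (equivalently,
inducing the same connected components as `S`). -/
def IsMaxForestOf (M S : Set G.E) : Prop :=
  M ⊆ S ∧ G.CycleFree M ∧ ∀ i j : G.V, G.Reach S i j ↔ G.Reach M i j

/-- The sign `σ(i,j;k,ℓ;F)` attached to a 2-forest `F`: `+1` if one component of `Γ|_F`
contains `i` and `k` and the other contains `j` and `ℓ`; `-1` if one component contains
`i` and `ℓ` and the other contains `j` and `k`; `0` otherwise. -/
noncomputable def sigma2 (F : Set G.E) (i j k l : G.V) : ℝ :=
  if ¬ G.Reach F i j ∧ G.Reach F i k ∧ G.Reach F j l then 1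
  else if ¬ G.Reach F i j ∧ G.Reach F i l ∧ G.Reach F j k then -1
  else 0

end Graph'

namespace Graph'

variable (G : Graph')

/-- An oriented edge: an edge together with an ordering of its endpoints. -/
def OEdge : Type := {x : G.E × G.V × G.V // G.ends x.1 = s(x.2.1, x.2.2)}

noncomputable instance : Fintype G.OEdge := Subtype.fintype _

namespace OEdge

variable {G}

/-- The underlying edge of an oriented edge. -/
def edge (o : G.OEdge) : G.E := o.1.1

/-- The source of an oriented edge. -/
def src (o : G.OEdge) : G.V := o.1.2.1

/-- The target of an oriented edge. -/
def tgt (o : G.OEdge) : G.V := o.1.2.2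

/-- The reversal of an oriented edge. -/
def rev (o : G.OEdge) : G.OEdge := ⟨(o.1.1, o.1.2.2, o.1.2.1), o.2.trans Sym2.eq_swap⟩

end OEdge

/-- An edge current assignment: a real-valued function on oriented edges with
`I(e : i → j) = −I(e : j → i)`. -/
def IsCurrent (I : G.OEdge → ℝ) : Prop := ∀ o : G.OEdge, I o.rev = - I o

/-- The edge current assignment `I` is consistent with the vertex current assignment `D`:
for every vertex `i`, `Σ_j Σ_{edges e : i → j} I(e : i → j) = D i`. -/
def Consistent (I : G.OEdge → ℝ) (D : G.V → ℝ) : Prop :=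
  ∀ x : G.V, (∑ o ∈ Finset.univ.filter (fun o : G.OEdge => o.src = x), I o) = D x

lemma exists_oedge (e : G.E) : ∃ o : G.OEdge, o.edge = e := by
  have h : ∀ z : Sym2 G.V, G.ends e = z → ∃ o : G.OEdge, o.edge = e := by
    refine Sym2.ind (fun a b h => ?_)
    exact ⟨⟨(e, a, b), h⟩, rfl⟩
  exact h (G.ends e) rfl

/-- A choice of orientation for each edge. -/
noncomputable def orient (e : G.E) : G.OEdge := Classical.choose (G.exists_oedge e)

lemma orient_edge (e : G.E) : (G.orient e).edge = e := Classical.choose_spec (G.exists_oedge e)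

/-- The power dissipated by an edge current assignment: `Σ_{e ∈ Ed(Γ)} μ(e) I(e)²`. -/
noncomputable def power (μ : G.E → ℝ) (I : G.OEdge → ℝ) : ℝ :=
  ∑ e : G.E, μ e * (I (G.orient e)) ^ 2

/-- The Green's function `g(Γ, μ; D, E) = Dᵀ v` for any `v` with `L v = E`
(for `Γ` connected, `μ` proper, and `D`, `E` zero-sum vectors, such a `v` exists and
`Dᵀ v` does not depend on the choice). -/
noncomputable def green (μ : G.E → ℝ) (D E : G.V → ℝ) : ℝ :=
  if h : ∃ v : G.V → ℝ, G.lap μ v = E then ∑ x : G.V, D x * Classical.choose h x else 0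

/-- The contracted graph `Γ/S`: identify the two endpoints of each edge in `S` and
delete the edges in `S`. -/
noncomputable def contract (S : Set G.E) : Graph' :=
  letI : DecidableEq (Quotient (Relation.EqvGen.setoid (G.Adj S))) := Classical.decEq _
  letI : DecidablePred (· ∈ S) := Classical.decPred _
  { V := Quotient (Relation.EqvGen.setoid (G.Adj S))
    E := {e : G.E // e ∉ S}
    ends := fun e => (G.ends e.1).map (Quotient.mk (Relation.EqvGen.setoid (G.Adj S))) }

/-- The quotient map `[·] : Vert(Γ) → Vert(Γ/S)`. -/
noncomputable def cmk (S : Set G.E) (x : G.V) : (G.contract S).V :=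
  Quotient.mk (Relation.EqvGen.setoid (G.Adj S)) x

/-- The edge of `Γ` underlying an edge of `Γ/S` (recall `Ed(Γ/S) = Ed(Γ)∖S`). -/
noncomputable def cval (S : Set G.E) (e : (G.contract S).E) : G.E := e.1

/-- The subset of `Ed(Γ/S) = Ed(Γ)∖S` induced by a subset `F ⊆ Ed(Γ)`, namely `F∖S`. -/
noncomputable def cset (S : Set G.E) (F : Set G.E) : Set (G.contract S).E :=
  {e : (G.contract S).E | G.cval S e ∈ F}

/-- The linear map `[·] : ℝ^{Vert(Γ)} → ℝ^{Vert(Γ/S)}` sending the basis vector `e_i`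
to `e_{[i]}`. -/
noncomputable def pushVec (S : Set G.E) (D : G.V → ℝ) : (G.contract S).V → ℝ := fun x =>
  ∑ i ∈ Finset.univ.filter (fun i : G.V => G.cmk S i = x), D i

/-- Contraction of walks: delete from a walk in `Γ` the edges belonging to `S`,
obtaining a walk in `Γ/S`. -/
noncomputable def contractWalk (S : Set G.E) :
    ∀ {i j : G.V}, G.Walk i j → (G.contract S).Walk (G.cmk S i) (G.cmk S j)
  | _, _, .nil a => .nil (G.cmk S a)
  | _, _, @Walk.cons _ a b _ e he w =>
    if hS : e ∈ S then
      (contractWalk S w).copy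
        (Quotient.sound (Relation.EqvGen.rel b a ⟨e, hS, he.trans Sym2.eq_swap⟩)) rfl
    else
      Walk.cons (j := G.cmk S b) ⟨e, hS⟩
        (by show Sym2.map _ (G.ends e) = s(G.cmk S a, G.cmk S b)
            rw [he]
            exact Sym2.map_pair_eq _ a b) (contractWalk S w)

/-- The current `I_{Γ|_T}(e : i → j)` flowing along the oriented edge `e : i → j` when a
unit current from `k` to `ℓ` is imposed on the spanning tree `Γ|_T`: it is `+1` if `e ∈ T`
and the unique path in `Γ|_T` from `k` to `ℓ` traverses `e` from `i` to `j`, `−1` if it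
traverses `e` from `j` to `i`, and `0` otherwise. -/
noncomputable def treeCurrent (T : Set G.E) (k l : G.V) (e : G.E) (i j : G.V) : ℝ :=
  if e ∈ T ∧ ∃ w : G.Walk k l, w.IsPath ∧ w.In T ∧ (i, e, j) ∈ w.steps then 1
  else if e ∈ T ∧ ∃ w : G.Walk k l, w.IsPath ∧ w.In T ∧ (j, e, i) ∈ w.steps then -1
  else 0

/-- The extended Green's function on possibly improper resistances: contract the edges of
zero resistance and take the Green's function of the resulting proper network, with the
pushed-forward vertex vectors. -/
noncomputable def egreen (μ : G.E → ℝ) (D E : G.V → ℝ) : ℝ :=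
  (G.contract {e : G.E | μ e = 0}).green (fun e => μ (G.cval {e : G.E | μ e = 0} e))
    (G.pushVec {e : G.E | μ e = 0} D) (G.pushVec {e : G.E | μ e = 0} E)

end Graph'

namespace Graph'

lemma sum_dite_subtype' {α : Type*} [Fintype α] (p : α → Prop) (f : Subtype p → ℝ) :
    ∑ o : Subtype p, f o = ∑ x : α, (if h : p x then f ⟨x, h⟩ else 0) := by
  rw [Finset.sum_dite]
  simp only [Finset.sum_const_zero, add_zero]
  exact Fintype.sum_equiv (Equiv.subtypeEquivRight (by simp)) _ _ (fun x => rfl)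

variable {G : Graph'}

namespace OEdge

@[simp] lemma rev_edge (o : G.OEdge) : o.rev.edge = o.edge := rfl
@[simp] lemma rev_src (o : G.OEdge) : o.rev.src = o.tgt := rfl
@[simp] lemma rev_tgt (o : G.OEdge) : o.rev.tgt = o.src := rfl
@[simp] lemma rev_rev (o : G.OEdge) : o.rev.rev = o := rfl

lemma ends_eq (o : G.OEdge) : G.ends o.edge = s(o.src, o.tgt) := o.2

lemma ext' {o o' : G.OEdge} (h1 : o.edge = o'.edge) (h2 : o.src = o'.src)
    (h3 : o.tgt = o'.tgt) : o = o' :=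
  Subtype.ext (Prod.ext h1 (Prod.ext h2 h3))

lemma rev_invol : Function.Involutive (rev (G := G)) := fun _ => rfl

lemma rev_bij : Function.Bijective (rev (G := G)) := rev_invol.bijective

end OEdge

/-- Divergence of an edge function at a vertex. -/
noncomputable def dvg (f : G.OEdge → ℝ) (x : G.V) : ℝ :=
  ∑ o ∈ Finset.univ.filter (fun o : G.OEdge => o.src = x), f o

lemma consistent_iff (f : G.OEdge → ℝ) (D : G.V → ℝ) :
    G.Consistent f D ↔ ∀ x, dvg f x = D x := Iff.rfl

lemma sum_oedge (f : G.OEdge → ℝ) :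
    ∑ o : G.OEdge, f o =
      ∑ e : G.E, ∑ i : G.V, ∑ j : G.V,
        (if h : G.ends e = s(i, j) then f ⟨(e, i, j), h⟩ else 0) := by
  have h := sum_dite_subtype' (fun x : G.E × G.V × G.V => G.ends x.1 = s(x.2.1, x.2.2)) f
  simp only [Fintype.sum_prod_type] at h
  rw [show (∑ o : G.OEdge, f o) = ∑ o : {x : G.E × G.V × G.V // G.ends x.1 = s(x.2.1, x.2.2)},
    f o from Fintype.sum_equiv (Equiv.refl _) _ _ fun _ => rfl]
  convert h

lemma dvg_eq (f : G.OEdge → ℝ) (x : G.V) :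
    dvg f x = ∑ e : G.E, ∑ j : G.V,
      (if h : G.ends e = s(x, j) then f ⟨(e, x, j), h⟩ else 0) := by
  rw [dvg, Finset.sum_filter, sum_oedge (fun o => if o.src = x then f o else 0)]
  refine Finset.sum_congr rfl fun e _ => ?_
  rw [Finset.sum_comm]
  refine Finset.sum_congr rfl fun j _ => ?_
  rw [Finset.sum_eq_single x]
  · split
    · simp [OEdge.src]
    · rfl
  · intro i _ hix
    split
    · simp [OEdge.src, hix]
    · rfl
  · intro h
    exact absurd (Finset.mem_univ x) h

/-- The harmonic current associated to a voltage `v`. -/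
noncomputable def hcur (μ : G.E → ℝ) (v : G.V → ℝ) : G.OEdge → ℝ := fun o =>
  (v o.src - v o.tgt) / μ o.edge

lemma hcur_isCurrent (μ : G.E → ℝ) (v : G.V → ℝ) : G.IsCurrent (hcur μ v) := by
  intro o
  simp only [hcur, OEdge.rev_src, OEdge.rev_tgt, OEdge.rev_edge]
  rw [← neg_div, neg_sub]

lemma dvg_hcur (μ : G.E → ℝ) (v : G.V → ℝ) (x : G.V) :
    dvg (hcur μ v) x = G.lap μ v x := by
  rw [dvg_eq, lap, Finset.sum_comm]
  refine Finset.sum_congr rfl fun e _ => Finset.sum_congr rfl fun j _ => ?_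
  split
  · rfl
  · rfl

lemma sum_rev (f : G.OEdge → ℝ) : ∑ o : G.OEdge, f o.rev = ∑ o : G.OEdge, f o :=
  OEdge.rev_bij.sum_comp f

lemma sum_src_mul (v : G.V → ℝ) (f : G.OEdge → ℝ) :
    ∑ x : G.V, v x * dvg f x = ∑ o : G.OEdge, v o.src * f o := by
  unfold dvg
  rw [← Finset.sum_fiberwise Finset.univ (fun o : G.OEdge => o.src)
    (fun o => v o.src * f o)]
  refine Finset.sum_congr rfl fun x _ => ?_
  rw [Finset.mul_sum]
  refine Finset.sum_congr rfl fun o ho => ?_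
  rw [(Finset.mem_filter.mp ho).2]

lemma pairing (v : G.V → ℝ) (f : G.OEdge → ℝ) (hf : G.IsCurrent f) :
    ∑ x : G.V, v x * dvg f x = 2⁻¹ * ∑ o : G.OEdge, (v o.src - v o.tgt) * f o := by
  have h2 : ∑ o : G.OEdge, v o.tgt * f o = - ∑ o : G.OEdge, v o.src * f o := by
    have := sum_rev (fun o => v o.src * f o.rev)
    simp only [OEdge.rev_src, OEdge.rev_rev] at this
    rw [this]
    simp only [hf _, mul_neg]
    rw [Finset.sum_neg_distrib]
  have h3 : ∑ o : G.OEdge, (v o.src - v o.tgt) * f o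
      = ∑ o : G.OEdge, v o.src * f o - ∑ o : G.OEdge, v o.tgt * f o := by
    rw [← Finset.sum_sub_distrib]
    exact Finset.sum_congr rfl fun o _ => by ring
  rw [sum_src_mul, h3, h2]
  ring

end Graph'

namespace Graph'

variable {G : Graph'}

lemma loop_fixed {o : G.OEdge} (h : o.src = o.tgt) : o.rev = o :=
  OEdge.ext' rfl h.symm h

lemma current_loop {f : G.OEdge → ℝ} (hf : G.IsCurrent f) {o : G.OEdge}
    (h : o.src = o.tgt) : f o = 0 := by
  have := hf o
  rw [loop_fixed h] at this
  linarith

lemma oedge_edge_cases (e : G.E) (o : G.OEdge) (ho : o.edge = e) :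
    o = G.orient e ∨ o = (G.orient e).rev := by
  have h1 : G.ends e = s((G.orient e).src, (G.orient e).tgt) := by
    have := (G.orient e).ends_eq
    rwa [G.orient_edge e] at this
  have h2 : G.ends e = s(o.src, o.tgt) := by rw [← ho]; exact o.ends_eq
  rw [h1] at h2
  rcases Sym2.eq_iff.mp h2 with ⟨ha, hb⟩ | ⟨ha, hb⟩
  · left; exact OEdge.ext' (ho.trans (G.orient_edge e).symm) ha.symm hb.symm
  · right; exact OEdge.ext' (ho.trans (G.orient_edge e).symm) hb.symm ha.symm

lemma sum_rev_invariant (h : G.OEdge → ℝ) (hrev : ∀ o : G.OEdge, h o.rev = h o)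
    (hloop : ∀ o : G.OEdge, o.src = o.tgt → h o = 0) :
    ∑ o : G.OEdge, h o = 2 * ∑ e : G.E, h (G.orient e) := by
  rw [← Finset.sum_fiberwise Finset.univ (fun o : G.OEdge => o.edge) h, Finset.mul_sum]
  refine Finset.sum_congr rfl fun e _ => ?_
  by_cases hl : (G.orient e).src = (G.orient e).tgt
  · have : Finset.univ.filter (fun o : G.OEdge => o.edge = e) = {G.orient e} := by
      ext o
      simp only [Finset.mem_filter, Finset.mem_univ, true_and, Finset.mem_singleton]
      constructor
      · intro ho
        rcases oedge_edge_cases e o ho with h1 | h1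
        · exact h1
        · rw [h1, loop_fixed hl]
      · rintro rfl; exact G.orient_edge e
    rw [this, Finset.sum_singleton, hloop _ hl]
    ring
  · have hne : G.orient e ≠ (G.orient e).rev := by
      intro hcon
      exact hl (congrArg OEdge.src hcon ▸ rfl)
    have : Finset.univ.filter (fun o : G.OEdge => o.edge = e)
        = {G.orient e, (G.orient e).rev} := by
      ext o
      simp only [Finset.mem_filter, Finset.mem_univ, true_and, Finset.mem_insert,
        Finset.mem_singleton]
      constructor
      · intro ho; exact oedge_edge_cases e o ho
      · rintro (rfl | rfl)
        · exact G.orient_edge e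
        · exact G.orient_edge e
    rw [this, Finset.sum_pair hne, hrev]
    ring

lemma power_eq_half (μ : G.E → ℝ) (f : G.OEdge → ℝ) (hf : G.IsCurrent f) :
    G.power μ f = 2⁻¹ * ∑ o : G.OEdge, μ o.edge * f o ^ 2 := by
  rw [sum_rev_invariant (fun o => μ o.edge * f o ^ 2)
    (fun o => by simp [hf o])
    (fun o ho => by show μ o.edge * f o ^ 2 = 0; rw [current_loop hf ho]; ring)]
  unfold power
  have : ∀ e : G.E, μ ((G.orient e).edge) = μ e := fun e => by rw [G.orient_edge e]
  rw [← mul_assoc, inv_mul_cancel₀ (by norm_num : (2:ℝ) ≠ 0), one_mul]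
  exact Finset.sum_congr rfl fun e _ => by rw [this e]

lemma isCurrent_sub {f g : G.OEdge → ℝ} (hf : G.IsCurrent f) (hg : G.IsCurrent g) :
    G.IsCurrent (fun o => f o - g o) := fun o => by simp [hf o, hg o]; ring

lemma dvg_sub (f g : G.OEdge → ℝ) (x : G.V) :
    dvg (fun o => f o - g o) x = dvg f x - dvg g x := by
  unfold dvg; rw [← Finset.sum_sub_distrib]

/-- Thomson decomposition: on a proper network, the power of any current consistent
with `D` equals `Dᵀv` plus the power of the difference with the harmonic current. -/
lemma power_decomp (μ : G.E → ℝ) (hμ : ∀ e, μ e ≠ 0) (v : G.V → ℝ) (D : G.V → ℝ)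
    (hv : G.lap μ v = D) (f : G.OEdge → ℝ) (hf : G.IsCurrent f)
    (hcons : G.Consistent f D) :
    G.power μ f = (∑ x : G.V, D x * v x)
      + G.power μ (fun o => f o - hcur μ v o) := by
  set g : G.OEdge → ℝ := hcur μ v with hgdef
  have hgc : G.IsCurrent g := hcur_isCurrent μ v
  have hdc : G.IsCurrent (fun o => f o - g o) := isCurrent_sub hf hgc
  have key : ∀ o : G.OEdge, μ o.edge * g o = v o.src - v o.tgt := fun o => by
    rw [hgdef]; unfold hcur; rw [mul_div_cancel₀ _ (hμ o.edge)]
  have hcons' : ∀ x, dvg f x = D x := hcons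
  have p1 : ∑ x : G.V, v x * dvg (fun o => f o - g o) x
      = 2⁻¹ * ∑ o : G.OEdge, (v o.src - v o.tgt) * (f o - g o) := pairing _ _ hdc
  have p1' : ∀ x, dvg (fun o => f o - g o) x = 0 := fun x => by
    rw [dvg_sub, hcons' x, dvg_hcur, hv, sub_self]
  have cross0 : ∑ o : G.OEdge, (v o.src - v o.tgt) * (f o - g o) = 0 := by
    have hz : ∑ x : G.V, v x * dvg (fun o => f o - g o) x = 0 := by
      simp [p1']
    rw [hz] at p1; linarith
  have crossμ : ∑ o : G.OEdge, μ o.edge * (g o * (f o - g o)) = 0 := by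
    rw [← cross0]
    exact Finset.sum_congr rfl fun o _ => by rw [← key o]; ring
  have p2 : ∑ x : G.V, v x * dvg g x
      = 2⁻¹ * ∑ o : G.OEdge, (v o.src - v o.tgt) * g o := pairing _ _ hgc
  have p2' : ∑ x : G.V, v x * dvg g x = ∑ x : G.V, v x * D x :=
    Finset.sum_congr rfl fun x _ => by rw [dvg_hcur, hv]
  have henergy : ∑ o : G.OEdge, μ o.edge * g o ^ 2 = 2 * ∑ x : G.V, D x * v x := by
    have h3 : ∑ o : G.OEdge, μ o.edge * g o ^ 2
        = ∑ o : G.OEdge, (v o.src - v o.tgt) * g o :=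
      Finset.sum_congr rfl fun o _ => by rw [← key o]; ring
    have h4 : ∑ x : G.V, v x * D x = ∑ x : G.V, D x * v x :=
      Finset.sum_congr rfl fun x _ => mul_comm _ _
    rw [h3]
    rw [p2', h4] at p2
    linarith
  have expand : ∑ o : G.OEdge, μ o.edge * f o ^ 2
      = ∑ o : G.OEdge, μ o.edge * g o ^ 2
        + ∑ o : G.OEdge, μ o.edge * (f o - g o) ^ 2
        + 2 * ∑ o : G.OEdge, μ o.edge * (g o * (f o - g o)) := by
    rw [Finset.mul_sum, ← Finset.sum_add_distrib, ← Finset.sum_add_distrib]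
    exact Finset.sum_congr rfl fun o _ => by ring
  rw [power_eq_half μ f hf, power_eq_half μ _ hdc, expand, henergy, crossμ]
  ring

lemma power_nonneg (μ : G.E → ℝ) (hμ : ∀ e, 0 ≤ μ e) (f : G.OEdge → ℝ) :
    0 ≤ G.power μ f :=
  Finset.sum_nonneg fun e _ => mul_nonneg (hμ e) (sq_nonneg _)

/-- Thomson's principle, inequality form. -/
lemma sum_le_power (μ : G.E → ℝ) (hμ : ∀ e, 0 < μ e) (v D : G.V → ℝ)
    (hv : G.lap μ v = D) (f : G.OEdge → ℝ) (hf : G.IsCurrent f)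
    (hcons : G.Consistent f D) :
    ∑ x : G.V, D x * v x ≤ G.power μ f := by
  rw [power_decomp μ (fun e => (hμ e).ne') v D hv f hf hcons]
  have := power_nonneg μ (fun e => (hμ e).le) (fun o => f o - hcur μ v o)
  linarith

/-- Energy of the harmonic current. -/
lemma power_hcur (μ : G.E → ℝ) (hμ : ∀ e, μ e ≠ 0) (v D : G.V → ℝ)
    (hv : G.lap μ v = D) :
    G.power μ (hcur μ v) = ∑ x : G.V, D x * v x := by
  have := power_decomp μ hμ v D hv (hcur μ v) (hcur_isCurrent μ v)
    (fun x => by show dvg (hcur μ v) x = D x; rw [dvg_hcur, hv])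
  have hz : G.power μ (fun o => hcur μ v o - hcur μ v o) = 0 := by
    unfold power; simp
  rw [hz] at this
  linarith

end Graph'

namespace Graph'

variable {G : Graph'}

lemma lap_add (μ : G.E → ℝ) (v w : G.V → ℝ) :
    G.lap μ (v + w) = G.lap μ v + G.lap μ w := by
  funext i
  simp only [lap, Pi.add_apply, ← Finset.sum_add_distrib]
  refine Finset.sum_congr rfl fun j _ => Finset.sum_congr rfl fun e _ => ?_
  split
  · ring
  · simp

lemma lap_smul (μ : G.E → ℝ) (a : ℝ) (v : G.V → ℝ) :
    G.lap μ (a • v) = a • G.lap μ v := by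
  funext i
  simp only [lap, Pi.smul_apply, smul_eq_mul, Finset.mul_sum]
  refine Finset.sum_congr rfl fun j _ => ?_
  refine Finset.sum_congr rfl fun e _ => ?_
  split
  · ring
  · simp

lemma lap_sub (μ : G.E → ℝ) (v w : G.V → ℝ) (i : G.V) :
    G.lap μ (fun x => v x - w x) i = G.lap μ v i - G.lap μ w i := by
  simp only [lap, ← Finset.sum_sub_distrib]
  refine Finset.sum_congr rfl fun j _ => Finset.sum_congr rfl fun e _ => ?_
  split
  · ring
  · simp

lemma lap_const (μ : G.E → ℝ) (c : ℝ) : G.lap μ (fun _ => c) = 0 := by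
  funext i
  simp [lap]

lemma lap_eq_zero_const (hG : G.Connected) (μ : G.E → ℝ) (hμ : ∀ e, 0 < μ e)
    (u : G.V → ℝ) (hu : G.lap μ u = 0) : ∀ x y : G.V, u x = u y := by
  have edge0 : ∀ o : G.OEdge, u o.src = u o.tgt := by
    have h2 := pairing u (hcur μ u) (hcur_isCurrent μ u)
    have h1 : ∑ x : G.V, u x * dvg (hcur μ u) x = 0 := by
      refine Finset.sum_eq_zero fun x _ => ?_
      rw [dvg_hcur, hu]
      simp
    rw [h1] at h2
    have h3 : ∑ o : G.OEdge, (u o.src - u o.tgt) * hcur μ u o = 0 := by linarith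
    have h4 : ∀ o : G.OEdge, 0 ≤ (u o.src - u o.tgt) * hcur μ u o := fun o => by
      unfold hcur
      rw [mul_div_assoc']
      exact div_nonneg (by nlinarith [sq_nonneg (u o.src - u o.tgt)]) (hμ o.edge).le
    intro o
    have h5 := (Finset.sum_eq_zero_iff_of_nonneg (fun o _ => h4 o)).mp h3 o
      (Finset.mem_univ o)
    have h6 : (u o.src - u o.tgt) * ((u o.src - u o.tgt) / μ o.edge) = 0 := h5
    rw [mul_div_assoc'] at h6
    rcases div_eq_zero_iff.mp h6 with h7 | h7
    · nlinarith [sq_abs (u o.src - u o.tgt)]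
    · exact absurd h7 (hμ o.edge).ne'
  intro x y
  induction hG x y with
  | rel a b hab =>
    obtain ⟨e, _, he⟩ := hab
    exact edge0 ⟨(e, a, b), he⟩
  | refl a => rfl
  | symm a b _ ih => exact ih.symm
  | trans a b c _ _ ih1 ih2 => exact ih1.trans ih2

/-- Existence of solutions to the Laplace equation on a connected proper network. -/
lemma exists_lap_eq (hG : G.Connected) (μ : G.E → ℝ) (hμ : ∀ e, 0 < μ e)
    (E : G.V → ℝ) (hE : ∑ x : G.V, E x = 0) : ∃ v : G.V → ℝ, G.lap μ v = E := by
  by_cases hV : Nonempty G.V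
  case neg => exact ⟨0, funext fun x => (hV ⟨x⟩).elim⟩
  obtain ⟨x₀⟩ := hV
  let L : (G.V → ℝ) →ₗ[ℝ] (G.V → ℝ) :=
    { toFun := G.lap μ
      map_add' := fun v w => lap_add μ v w
      map_smul' := fun a v => lap_smul μ a v }
  let T : (G.V → ℝ) →ₗ[ℝ] ℝ :=
    { toFun := fun v => ∑ x : G.V, v x
      map_add' := fun v w => by simp [Finset.sum_add_distrib]
      map_smul' := fun a v => by simp [Finset.mul_sum] }
  have hrange : LinearMap.range L ≤ LinearMap.ker T := by
    rintro F ⟨v, rfl⟩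
    have hp := pairing (fun _ => (1:ℝ)) (hcur μ v) (hcur_isCurrent μ v)
    simp only [sub_self, zero_mul, Finset.sum_const_zero, mul_zero, one_mul] at hp
    have : ∀ x, dvg (hcur μ v) x = G.lap μ v x := dvg_hcur μ v
    rw [LinearMap.mem_ker]
    show ∑ x : G.V, G.lap μ v x = 0
    rw [← Finset.sum_congr rfl fun x _ => (this x)]
    exact hp
  have hone : (fun _ => (1:ℝ)) ≠ (0 : G.V → ℝ) := by
    intro h
    have := congrFun h x₀
    norm_num at this
  have hker : LinearMap.ker L = Submodule.span ℝ {(fun _ => (1:ℝ) : G.V → ℝ)} := by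
    apply le_antisymm
    · intro u hu
      rw [LinearMap.mem_ker] at hu
      have hc := lap_eq_zero_const hG μ hμ u hu
      rw [Submodule.mem_span_singleton]
      exact ⟨u x₀, funext fun x => by simp [hc x₀ x]⟩
    · rw [Submodule.span_le, Set.singleton_subset_iff]
      exact lap_const μ 1
  have hn : Module.finrank ℝ (G.V → ℝ) = Fintype.card G.V := Module.finrank_pi ℝ
  have hker1 : Module.finrank ℝ (LinearMap.ker L) = 1 := by
    rw [hker]
    exact finrank_span_singleton hone
  have hTsurj : LinearMap.range T = ⊤ := by
    rw [LinearMap.range_eq_top]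
    intro c
    exact ⟨Pi.single x₀ c, by simp [T, Finset.sum_pi_single']⟩
  have e1 := LinearMap.finrank_range_add_finrank_ker L
  have e2 := LinearMap.finrank_range_add_finrank_ker T
  have hT1 : Module.finrank ℝ (LinearMap.range T) = 1 := by
    rw [hTsurj]
    simpa using finrank_top ℝ ℝ
  rw [hker1, hn] at e1
  rw [hT1, hn] at e2
  have hle : Module.finrank ℝ (LinearMap.ker T) ≤ Module.finrank ℝ (LinearMap.range L) := by
    omega
  have heq := Submodule.eq_of_le_of_finrank_le hrange hle
  have hEmem : E ∈ LinearMap.ker T := by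
    rw [LinearMap.mem_ker]
    exact hE
  rw [← heq] at hEmem
  obtain ⟨v, hv⟩ := hEmem
  exact ⟨v, hv⟩

/-- Evaluation of the Green's function. -/
lemma green_eval (hG : G.Connected) (μ : G.E → ℝ) (hμ : ∀ e, 0 < μ e)
    (D E v : G.V → ℝ) (hD : ∑ x : G.V, D x = 0) (hv : G.lap μ v = E) :
    G.green μ D E = ∑ x : G.V, D x * v x := by
  unfold green
  have h : ∃ w : G.V → ℝ, G.lap μ w = E := ⟨v, hv⟩
  rw [dif_pos h]
  have hu : G.lap μ (Classical.choose h) = E := Classical.choose_spec h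
  set u := Classical.choose h
  by_cases hV : Nonempty G.V
  case neg =>
    rw [Finset.sum_eq_zero fun x _ => (hV ⟨x⟩).elim,
      Finset.sum_eq_zero fun x _ => (hV ⟨x⟩).elim]
  obtain ⟨x₀⟩ := hV
  have hdiff : G.lap μ (fun x => u x - v x) = 0 := by
    funext i
    rw [lap_sub, hu, hv, sub_self]
    rfl
  have hc := lap_eq_zero_const hG μ hμ _ hdiff
  have h1 : ∑ x : G.V, D x * u x - ∑ x : G.V, D x * v x
      = ∑ x : G.V, D x * (u x - v x) := by
    rw [← Finset.sum_sub_distrib]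
    exact Finset.sum_congr rfl fun x _ => by ring
  have h2 : ∑ x : G.V, D x * (u x - v x) = ∑ x : G.V, D x * (u x₀ - v x₀) :=
    Finset.sum_congr rfl fun x _ => by rw [hc x x₀]
  have h3 : ∑ x : G.V, D x * (u x₀ - v x₀) = 0 := by
    rw [← Finset.sum_mul, hD, zero_mul]
  linarith

end Graph'

namespace Graph'

variable {G : Graph'}

namespace Walk

def append : ∀ {i j k : G.V}, G.Walk i j → G.Walk j k → G.Walk i k
  | _, _, _, .nil _, w2 => w2
  | _, _, _, .cons e he w, w2 => .cons e he (append w w2)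

def reverse : ∀ {i j : G.V}, G.Walk i j → G.Walk j i
  | _, _, .nil a => .nil a
  | _, _, @Walk.cons _ a _ _ e he w =>
      append (reverse w) (.cons e (he.trans Sym2.eq_swap) (.nil a))

lemma edges_append : ∀ {i j k : G.V} (w1 : G.Walk i j) (w2 : G.Walk j k),
    (append w1 w2).edges = w1.edges ++ w2.edges
  | _, _, _, .nil _, w2 => rfl
  | _, _, _, .cons e he w, w2 => by
      show e :: (append w w2).edges = (e :: w.edges) ++ w2.edges
      rw [edges_append w w2]
      rfl

lemma mem_edges_reverse : ∀ {i j : G.V} (w : G.Walk i j) (e : G.E),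
    e ∈ (reverse w).edges → e ∈ w.edges
  | _, _, .nil _, e, h => h
  | _, _, .cons e' he' w, e, h => by
      unfold reverse at h
      rw [edges_append] at h
      rcases List.mem_append.mp h with h1 | h1
      · exact List.mem_cons_of_mem _ (mem_edges_reverse w e h1)
      · rcases List.mem_cons.mp h1 with h2 | h2
        · exact h2 ▸ List.mem_cons_self
        · exact absurd h2 (List.not_mem_nil)

lemma in_append {i j k : G.V} {w1 : G.Walk i j} {w2 : G.Walk j k} {F : Set G.E}
    (h1 : w1.In F) (h2 : w2.In F) : (append w1 w2).In F := by
  intro e he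
  rw [edges_append] at he
  rcases List.mem_append.mp he with h | h
  · exact h1 e h
  · exact h2 e h

lemma in_reverse {i j : G.V} {w : G.Walk i j} {F : Set G.E} (h : w.In F) :
    (reverse w).In F := fun e he => h e (mem_edges_reverse w e he)

lemma reach_of_walk {F : Set G.E} : ∀ {i j : G.V} (w : G.Walk i j),
    w.In F → G.Reach F i j
  | _, _, .nil a, _ => Relation.EqvGen.refl a
  | _, _, @Walk.cons _ a b _ e he w, hIn => by
      have hn : G.Reach F a b :=
        Relation.EqvGen.rel a b ⟨e, hIn e (List.mem_cons_self), he⟩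
      exact Relation.EqvGen.trans _ _ _ hn
        (reach_of_walk w (fun e' he' => hIn e' (List.mem_cons_of_mem _ he')))

end Walk

lemma reach_walk {F : Set G.E} {i j : G.V} (h : G.Reach F i j) :
    ∃ w : G.Walk i j, w.In F := by
  induction h with
  | rel a b hab =>
    obtain ⟨e, heF, he⟩ := hab
    refine ⟨.cons e he (.nil b), fun e' he' => ?_⟩
    rcases List.mem_cons.mp he' with h1 | h1
    · exact h1 ▸ heF
    · exact absurd h1 (List.not_mem_nil)
  | refl a => exact ⟨.nil a, fun e' he' => absurd he' (List.not_mem_nil)⟩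
  | symm a b _ ih =>
    obtain ⟨w, hw⟩ := ih
    exact ⟨w.reverse, Walk.in_reverse hw⟩
  | trans a b c _ _ ih1 ih2 =>
    obtain ⟨w1, hw1⟩ := ih1
    obtain ⟨w2, hw2⟩ := ih2
    exact ⟨w1.append w2, Walk.in_append hw1 hw2⟩

lemma cmk_surjective (S : Set G.E) : Function.Surjective (G.cmk S) := by
  intro X
  obtain ⟨x, hx⟩ := Quotient.exists_rep X
  exact ⟨x, hx⟩

lemma reach_cmk_eq {S : Set G.E} {x y : G.V} (h : G.Reach S x y) :
    G.cmk S x = G.cmk S y := Quotient.sound h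

lemma cmk_eq_reach {S : Set G.E} {x y : G.V} (h : G.cmk S x = G.cmk S y) :
    G.Reach S x y := Quotient.exact h

lemma adj_cmk {S : Set G.E} {e : G.E} {a b : G.V} (hS : e ∈ S)
    (he : G.ends e = s(a, b)) : G.cmk S a = G.cmk S b :=
  reach_cmk_eq (Relation.EqvGen.rel a b ⟨e, hS, he⟩)

lemma contract_connected (hG : G.Connected) (S : Set G.E) :
    (G.contract S).Connected := by
  intro X Y
  obtain ⟨x, rfl⟩ := cmk_surjective S X
  obtain ⟨y, rfl⟩ := cmk_surjective S Y
  obtain ⟨w, _⟩ := reach_walk (hG x y)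
  exact Walk.reach_of_walk (G.contractWalk S w) (fun e _ => Set.mem_univ e)

lemma sum_pushVec (S : Set G.E) (D : G.V → ℝ) :
    ∑ X : (G.contract S).V, G.pushVec S D X = ∑ x : G.V, D x :=
  Finset.sum_fiberwise Finset.univ (G.cmk S) D

lemma sum_mul_pushVec (S : Set G.E) (w : (G.contract S).V → ℝ) (F : G.V → ℝ) :
    ∑ X : (G.contract S).V, w X * G.pushVec S F X
      = ∑ x : G.V, w (G.cmk S x) * F x := by
  unfold pushVec
  rw [← Finset.sum_fiberwise Finset.univ (G.cmk S) (fun x => w (G.cmk S x) * F x)]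
  refine Finset.sum_congr rfl fun X _ => ?_
  rw [Finset.mul_sum]
  exact Finset.sum_congr rfl fun x hx => by rw [(Finset.mem_filter.mp hx).2]

lemma pushVec_sub (S : Set G.E) (A B : G.V → ℝ) (X : (G.contract S).V) :
    G.pushVec S (fun x => A x - B x) X = G.pushVec S A X - G.pushVec S B X := by
  unfold pushVec
  rw [← Finset.sum_sub_distrib]

end Graph'

namespace Graph'

variable {G : Graph'}

lemma lap_contract (S : Set G.E) (μ : G.E → ℝ) (w : (G.contract S).V → ℝ)
    (X : (G.contract S).V) :
    (G.contract S).lap (fun e' => μ (G.cval S e')) w X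
      = G.pushVec S (G.lap μ (fun x => w (G.cmk S x))) X := by
  classical
  set v : G.V → ℝ := fun x => w (G.cmk S x) with hv
  have hRHS : G.pushVec S (G.lap μ v) X
      = ∑ e : G.E, ∑ x : G.V, ∑ j : G.V,
          (if G.cmk S x = X ∧ G.ends e = s(x, j) then (v x - v j) / μ e else 0) := by
    unfold pushVec
    rw [Finset.sum_filter]
    have step : ∀ x : G.V, (if G.cmk S x = X then G.lap μ v x else 0)
        = ∑ j : G.V, ∑ e : G.E,
            (if G.cmk S x = X ∧ G.ends e = s(x, j) then (v x - v j) / μ e else 0) := by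
      intro x
      by_cases h : G.cmk S x = X
      · simp only [h, if_pos, lap, true_and]
      · simp [h]
    rw [Finset.sum_congr rfl fun x _ => step x]
    rw [Finset.sum_congr rfl fun x (_ : x ∈ (Finset.univ : Finset G.V)) =>
      Finset.sum_comm (s := Finset.univ) (t := Finset.univ)
      (f := fun j e => (if G.cmk S x = X ∧ G.ends e = s(x, j) then (v x - v j) / μ e else 0))]
    exact Finset.sum_comm
  have hLHS : (G.contract S).lap (fun e' => μ (G.cval S e')) w X
      = ∑ e : G.E, (if h : e ∉ S then
          ∑ J : (G.contract S).V,
            (if Sym2.map (G.cmk S) (G.ends e) = s(X, J) then (w X - w J) / μ e else 0)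
          else 0) := by
    show (∑ J : (G.contract S).V, ∑ e' : (G.contract S).E,
        if (G.contract S).ends e' = s(X, J) then (w X - w J) / μ (G.cval S e') else 0) = _
    rw [Finset.sum_comm]
    have h := sum_dite_subtype' (fun e : G.E => e ∉ S)
      (fun e' : {e : G.E // e ∉ S} => ∑ J : (G.contract S).V,
        (if (G.contract S).ends e' = s(X, J) then (w X - w J) / μ e'.1 else 0))
    have huniv : (@Finset.univ (G.contract S).E (G.contract S).fintE)
        = @Finset.univ _ (@Subtype.fintype G.E (fun e => e ∉ S)
            (fun a => Classical.propDecidable (a ∉ S)) G.fintE) :=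
      congrArg (fun i : Fintype (G.contract S).E => @Finset.univ _ i)
        (Subsingleton.elim _ _)
    rw [huniv]
    refine h.trans (Finset.sum_congr rfl fun e _ => ?_)
    by_cases hS : e ∉ S
    · rw [dif_pos hS, dif_pos hS]
      rfl
    · rw [dif_neg hS, dif_neg hS]
  rw [hLHS, hRHS]
  refine Finset.sum_congr rfl fun e _ => ?_
  obtain ⟨o, ho⟩ := G.exists_oedge e
  have hab : G.ends e = s(o.src, o.tgt) := by rw [← ho]; exact o.ends_eq
  set a := o.src with hadef
  set b := o.tgt with hbdef
  have hB : ∑ x : G.V, ∑ j : G.V,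
      (if G.cmk S x = X ∧ G.ends e = s(x, j) then (v x - v j) / μ e else 0)
      = (if G.cmk S a = X then (v a - v b) / μ e else 0)
        + (if G.cmk S b = X then (v b - v a) / μ e else 0) := by
    rw [← Fintype.sum_prod_type
      (f := fun p : G.V × G.V =>
        if G.cmk S p.1 = X ∧ G.ends e = s(p.1, p.2) then (v p.1 - v p.2) / μ e else 0)]
    by_cases hab' : a = b
    · have hz : ∀ p : G.V × G.V,
          (if G.cmk S p.1 = X ∧ G.ends e = s(p.1, p.2) then (v p.1 - v p.2) / μ e else 0)
            = 0 := by
        intro p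
        split_ifs with h
        · have h2 : s(a, b) = s(p.1, p.2) := hab.symm.trans h.2
          rcases Sym2.eq_iff.mp h2 with ⟨h3, h4⟩ | ⟨h3, h4⟩ <;>
            rw [← h3, ← h4, hab', sub_self, zero_div]
        · rfl
      rw [Finset.sum_eq_zero (fun p _ => hz p)]
      simp [hab']
    · have hne : ((a, b) : G.V × G.V) ≠ (b, a) := by
        intro hcon
        exact hab' (congrArg Prod.fst hcon)
      have hzero : ∀ p ∈ (Finset.univ : Finset (G.V × G.V)),
          p ∉ ({(a, b), (b, a)} : Finset (G.V × G.V)) →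
          (if G.cmk S p.1 = X ∧ G.ends e = s(p.1, p.2) then (v p.1 - v p.2) / μ e else 0)
            = 0 := by
        intro p _ hp
        split_ifs with h
        · exfalso
          have h2 : s(a, b) = s(p.1, p.2) := hab.symm.trans h.2
          simp only [Finset.mem_insert, Finset.mem_singleton] at hp
          push_neg at hp
          rcases Sym2.eq_iff.mp h2 with ⟨h3, h4⟩ | ⟨h3, h4⟩
          · exact hp.1 (Prod.ext h3.symm h4.symm)
          · exact hp.2 (Prod.ext h4.symm h3.symm)
        · rfl
      rw [← Finset.sum_subset (Finset.subset_univ ({(a, b), (b, a)} :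
          Finset (G.V × G.V))) hzero]
      rw [Finset.sum_pair hne]
      have c1 : (G.cmk S a = X ∧ G.ends e = s(a, b)) ↔ G.cmk S a = X := by simp [hab]
      have c2 : (G.cmk S b = X ∧ G.ends e = s(b, a)) ↔ G.cmk S b = X := by
        rw [hab]
        simp [Sym2.eq_iff, hab']
      rw [if_congr c1 rfl rfl, if_congr c2 rfl rfl]
  rw [hB]
  by_cases hS : e ∈ S
  · rw [dif_neg (not_not_intro hS)]
    have hv' : v a = v b := congrArg w (adj_cmk hS hab)
    simp [hv']
  · rw [dif_pos hS, hab, Sym2.map_pair_eq]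
    by_cases hqq : G.cmk S a = G.cmk S b
    · rw [Finset.sum_eq_zero]
      · have hva : v a = v b := congrArg w hqq
        simp [hva]
      · intro J _
        split_ifs with h
        · rcases Sym2.eq_iff.mp h with ⟨h1, h2⟩ | ⟨h1, h2⟩
          · rw [← h1, ← h2, hqq, sub_self, zero_div]
          · rw [← h2, ← h1, hqq, sub_self, zero_div]
        · rfl
    · have hne : G.cmk S b ≠ G.cmk S a := fun hcon => hqq hcon.symm
      have hzero : ∀ J ∈ (Finset.univ : Finset (G.contract S).V),
          J ∉ ({G.cmk S b, G.cmk S a} : Finset (G.contract S).V) →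
          (if s(G.cmk S a, G.cmk S b) = s(X, J) then (w X - w J) / μ e else 0) = 0 := by
        intro J _ hJ
        split_ifs with h
        · exfalso
          simp only [Finset.mem_insert, Finset.mem_singleton] at hJ
          push_neg at hJ
          rcases Sym2.eq_iff.mp h with ⟨h1, h2⟩ | ⟨h1, h2⟩
          · exact hJ.1 h2.symm
          · exact hJ.2 h1.symm
        · rfl
      rw [← Finset.sum_subset (Finset.subset_univ ({G.cmk S b, G.cmk S a} :
          Finset (G.contract S).V)) hzero]
      rw [Finset.sum_pair hne]
      have c1 : (s(G.cmk S a, G.cmk S b) = s(X, G.cmk S b)) ↔ G.cmk S a = X := by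
        rw [Sym2.eq_iff]
        constructor
        · rintro (⟨h1, _⟩ | ⟨_, h2⟩)
          · exact h1
          · exact absurd ‹G.cmk S a = G.cmk S b› hqq
        · intro h
          exact Or.inl ⟨h, rfl⟩
      have c2 : (s(G.cmk S a, G.cmk S b) = s(X, G.cmk S a)) ↔ G.cmk S b = X := by
        rw [Sym2.eq_iff]
        constructor
        · rintro (⟨_, h2⟩ | ⟨_, h2⟩)
          · exact absurd h2.symm hqq
          · exact h2
        · intro h
          exact Or.inr ⟨rfl, h⟩
      rw [if_congr c1 rfl rfl, if_congr c2 rfl rfl]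
      have t1 : (if G.cmk S a = X then (w X - w (G.cmk S b)) / μ e else 0)
          = (if G.cmk S a = X then (v a - v b) / μ e else 0) := by
        by_cases h1 : G.cmk S a = X
        · rw [if_pos h1, if_pos h1]
          show (w X - w (G.cmk S b)) / μ e = (w (G.cmk S a) - w (G.cmk S b)) / μ e
          rw [h1]
        · rw [if_neg h1, if_neg h1]
      have t2 : (if G.cmk S b = X then (w X - w (G.cmk S a)) / μ e else 0)
          = (if G.cmk S b = X then (v b - v a) / μ e else 0) := by
        by_cases h2 : G.cmk S b = X
        · rw [if_pos h2, if_pos h2]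
          show (w X - w (G.cmk S a)) / μ e = (w (G.cmk S b) - w (G.cmk S a)) / μ e
          rw [h2]
        · rw [if_neg h2, if_neg h2]
      rw [t1, t2]
end Graph'

namespace Graph'

variable {G : Graph'}

/-- The current associated to a walk. -/
noncomputable def wcur {i j : G.V} (w : G.Walk i j) : G.OEdge → ℝ := fun o =>
  ((w.steps.count (o.src, o.edge, o.tgt) : ℝ)
    - (w.steps.count (o.tgt, o.edge, o.src) : ℝ))

lemma wcur_isCurrent {i j : G.V} (w : G.Walk i j) : G.IsCurrent (wcur w) := by
  intro o
  simp only [wcur, OEdge.rev_src, OEdge.rev_tgt, OEdge.rev_edge]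
  ring

lemma steps_edge_mem : ∀ {i j : G.V} (w : G.Walk i j) (t : G.V × G.E × G.V),
    t ∈ w.steps → t.2.1 ∈ w.edges
  | _, _, .nil _, t, ht => absurd ht List.not_mem_nil
  | _, _, .cons _ _ w, t, ht => by
      rcases List.mem_cons.mp ht with h | h
      · rw [h]
        exact List.mem_cons_self
      · exact List.mem_cons_of_mem _ (steps_edge_mem w t h)

lemma wcur_support {i j : G.V} (w : G.Walk i j) (o : G.OEdge)
    (h : o.edge ∉ w.edges) : wcur w o = 0 := by
  have h1 : (o.src, o.edge, o.tgt) ∉ w.steps := fun hc => h (steps_edge_mem w _ hc)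
  have h2 : (o.tgt, o.edge, o.src) ∉ w.steps := fun hc => h (steps_edge_mem w _ hc)
  simp [wcur, List.count_eq_zero_of_not_mem h1, List.count_eq_zero_of_not_mem h2]

lemma sum_ite_oedge (x : G.V) (o₁ : G.OEdge) :
    ∑ o ∈ Finset.univ.filter (fun o : G.OEdge => o.src = x),
      (if o = o₁ then (1:ℝ) else 0) = if o₁.src = x then 1 else 0 := by
  rw [Finset.sum_ite_eq' (Finset.univ.filter (fun o : G.OEdge => o.src = x)) o₁
    (fun _ => (1:ℝ))]
  by_cases h : o₁.src = x
  · rw [if_pos h, if_pos]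
    simp [h]
  · rw [if_neg h, if_neg]
    simp [h]

lemma dvg_wcur : ∀ {i j : G.V} (w : G.Walk i j) (x : G.V),
    dvg (wcur w) x = (if i = x then (1:ℝ) else 0) - (if j = x then (1:ℝ) else 0)
  | _, _, .nil a, x => by
      have hz : ∀ o : G.OEdge, wcur (Walk.nil a) o = 0 := fun o => by
        simp [wcur, Walk.steps]
      unfold dvg
      rw [Finset.sum_congr rfl fun o _ => hz o]
      simp
  | _, _, @Walk.cons _ a b k e he w, x => by
      have hstep : ∀ o : G.OEdge, wcur (Walk.cons e he w) o
          = wcur w o + ((if o = (⟨(e, a, b), he⟩ : G.OEdge) then (1:ℝ) else 0)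
            - (if o = (⟨(e, b, a), he.trans Sym2.eq_swap⟩ : G.OEdge) then (1:ℝ) else 0)) := by
        intro o
        have he1 : (a = o.src ∧ e = o.edge ∧ b = o.tgt)
            ↔ o = (⟨(e, a, b), he⟩ : G.OEdge) := by
          constructor
          · rintro ⟨h1, h2, h3⟩
            exact OEdge.ext' h2.symm h1.symm h3.symm
          · intro h
            rw [h]
            exact ⟨rfl, rfl, rfl⟩
        have he2 : (a = o.tgt ∧ e = o.edge ∧ b = o.src)
            ↔ o = (⟨(e, b, a), he.trans Sym2.eq_swap⟩ : G.OEdge) := by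
          constructor
          · rintro ⟨h1, h2, h3⟩
            exact OEdge.ext' h2.symm h3.symm h1.symm
          · intro h
            rw [h]
            exact ⟨rfl, rfl, rfl⟩
        have hc1 : ((Walk.cons e he w).steps).count (o.src, o.edge, o.tgt)
            = w.steps.count (o.src, o.edge, o.tgt)
              + if a = o.src ∧ e = o.edge ∧ b = o.tgt then 1 else 0 := by
          show ((a, e, b) :: w.steps).count (o.src, o.edge, o.tgt) = _
          rw [List.count_cons]
          congr 1
          simp [beq_iff_eq]
        have hc2 : ((Walk.cons e he w).steps).count (o.tgt, o.edge, o.src)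
            = w.steps.count (o.tgt, o.edge, o.src)
              + if a = o.tgt ∧ e = o.edge ∧ b = o.src then 1 else 0 := by
          show ((a, e, b) :: w.steps).count (o.tgt, o.edge, o.src) = _
          rw [List.count_cons]
          congr 1
          simp [beq_iff_eq]
        unfold wcur
        rw [hc1, hc2, if_congr he1 rfl rfl, if_congr he2 rfl rfl]
        push_cast [apply_ite (Nat.cast : ℕ → ℝ)]
        ring
      have hd : dvg (wcur (Walk.cons e he w)) x
          = dvg (wcur w) x + ((if a = x then (1:ℝ) else 0)
            - (if b = x then (1:ℝ) else 0)) := by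
        unfold dvg
        rw [Finset.sum_congr rfl fun o _ => hstep o, Finset.sum_add_distrib,
          Finset.sum_sub_distrib]
        erw [sum_ite_oedge x, sum_ite_oedge x]
        rfl
      rw [hd, dvg_wcur w x]
      ring

/-- Flows with prescribed divergence supported on `S`, when the divergence vanishes
on each `S`-component. -/
lemma exists_flow (S : Set G.E) (R : G.V → ℝ) (hR : ∀ X, G.pushVec S R X = 0) :
    ∃ J : G.OEdge → ℝ, G.IsCurrent J ∧ (∀ x, dvg J x = R x)
      ∧ (∀ o : G.OEdge, o.edge ∉ S → J o = 0) := by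
  classical
  set r : G.V → G.V := fun x => (G.cmk S x).out with hrdef
  have hr : ∀ x, G.cmk S (r x) = G.cmk S x := fun x => Quotient.out_eq (G.cmk S x)
  have hreach : ∀ x, G.Reach S x (r x) := fun x => cmk_eq_reach (hr x).symm
  choose wk hwk using fun x => reach_walk (hreach x)
  refine ⟨fun o => ∑ x : G.V, R x * wcur (wk x) o, ?_, ?_, ?_⟩
  · intro o
    rw [← Finset.sum_neg_distrib]
    exact Finset.sum_congr rfl fun x _ => by rw [wcur_isCurrent (wk x) o]; ring
  · intro y
    have hswap : dvg (fun o => ∑ x : G.V, R x * wcur (wk x) o) y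
        = ∑ x : G.V, R x * dvg (wcur (wk x)) y := by
      unfold dvg
      rw [Finset.sum_comm]
      exact Finset.sum_congr rfl fun x _ => (Finset.mul_sum _ _ _).symm
    rw [hswap]
    have hterm : ∀ x : G.V, R x * dvg (wcur (wk x)) y
        = (if x = y then R x else 0) - (if r x = y then R x else 0) := by
      intro x
      rw [dvg_wcur (wk x) y]
      by_cases h1 : x = y
      · by_cases h2 : r x = y
        · rw [if_pos h1, if_pos h2, if_pos h1, if_pos h2]; ring
        · rw [if_pos h1, if_neg h2, if_pos h1, if_neg h2]; ring
      · by_cases h2 : r x = y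
        · rw [if_neg h1, if_pos h2, if_neg h1, if_pos h2]; ring
        · rw [if_neg h1, if_neg h2, if_neg h1, if_neg h2]; ring
    rw [Finset.sum_congr rfl fun x _ => hterm x, Finset.sum_sub_distrib]
    have hA : ∑ x : G.V, (if x = y then R x else 0) = R y := by
      rw [Finset.sum_ite_eq' Finset.univ y R]
      simp
    have hkey : ∀ x : G.V, (r x = y) ↔ (G.cmk S x = G.cmk S y ∧ r y = y) := by
      intro x
      constructor
      · intro h
        have h1 : G.cmk S x = G.cmk S y := by
          rw [← hr x, h]
      -- cmk (r x) = cmk x and r x = y gives cmk y = cmk x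
        have h2 : r y = y := by
          rw [hrdef]
          show (G.cmk S y).out = y
          rw [← h1, ← h]
        exact ⟨h1, h2⟩
      · rintro ⟨h1, h2⟩
        show (G.cmk S x).out = y
        rw [h1]
        exact h2
    have hB : ∑ x : G.V, (if r x = y then R x else 0) = 0 := by
      rw [Finset.sum_congr rfl fun x _ =>
        if_congr (hkey x) rfl rfl]
      by_cases hy : r y = y
      · have : ∀ x : G.V, (if G.cmk S x = G.cmk S y ∧ r y = y then R x else 0)
            = (if G.cmk S x = G.cmk S y then R x else 0) := fun x => by
          simp [hy]
        rw [Finset.sum_congr rfl fun x _ => this x]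
        have := hR (G.cmk S y)
        unfold pushVec at this
        rw [Finset.sum_filter] at this
        exact this
      · refine Finset.sum_eq_zero fun x _ => ?_
        rw [if_neg]
        rintro ⟨-, h2⟩
        exact hy h2
    rw [hA, hB, sub_zero]
  · intro o ho
    refine Finset.sum_eq_zero fun x _ => ?_
    rw [wcur_support (wk x) o fun hmem => ho (hwk x o.edge hmem), mul_zero]

end Graph'

namespace Graph'

variable {G : Graph'}

lemma sum_ite_rev_zero (f : G.OEdge → ℝ) (hf : G.IsCurrent f) (C : G.OEdge → Prop)
    (hC : ∀ o, C o ↔ C o.rev) : ∑ o : G.OEdge, (if C o then f o else 0) = 0 := by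
  classical
  refine Finset.sum_involution (fun o _ => o.rev) ?_ ?_ (fun o _ => Finset.mem_univ _)
    (fun o _ => OEdge.rev_rev o)
  · intro o _
    by_cases hc : C o
    · rw [if_pos hc, if_pos ((hC o).mp hc), hf o]
      ring
    · rw [if_neg hc, if_neg (fun h => hc ((hC o).mpr h))]
      norm_num
  · intro o _ hne hrev
    have hco : C o := by
      by_contra hc
      exact hne (if_neg hc)
    have hfo : f o ≠ 0 := fun h => hne (by rw [if_pos hco, h])
    have hrr : o.rev = o := hrev
    have := hf o
    rw [hrr] at this
    exact hfo (by linarith)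

lemma sum_contract_edges (S : Set G.E) (F : (G.contract S).E → ℝ) :
    ∑ e' : (G.contract S).E, F e' = ∑ e : G.E, (if h : e ∉ S then F ⟨e, h⟩ else 0) := by
  have h := sum_dite_subtype' (fun e : G.E => e ∉ S)
    (fun e' : {e : G.E // e ∉ S} => F e')
  have huniv : (@Finset.univ (G.contract S).E (G.contract S).fintE)
      = @Finset.univ _ (@Subtype.fintype G.E (fun e => e ∉ S)
          (fun a => Classical.propDecidable (a ∉ S)) G.fintE) :=
    congrArg (fun i : Fintype (G.contract S).E => @Finset.univ _ i)
      (Subsingleton.elim _ _)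
  rw [huniv]
  refine h.trans (Finset.sum_congr rfl fun e _ => ?_)
  by_cases hS : e ∉ S
  · rw [dif_pos hS, dif_pos hS]
  · rw [dif_neg hS, dif_neg hS]

/-- Pushing a current to the contracted graph. -/
lemma push_current (S : Set G.E) (μ : G.E → ℝ) (hμ : ∀ e, 0 ≤ μ e)
    (f : G.OEdge → ℝ) (hf : G.IsCurrent f) (D : G.V → ℝ) (hcons : G.Consistent f D) :
    ∃ f' : (G.contract S).OEdge → ℝ, (G.contract S).IsCurrent f'
      ∧ (G.contract S).Consistent f' (G.pushVec S D)
      ∧ (G.contract S).power (fun e' => μ (G.cval S e')) f' ≤ G.power μ f := by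
  classical
  set P : G.OEdge → (G.contract S).OEdge → Prop := fun o o' =>
    o.edge = G.cval S o'.edge ∧ G.cmk S o.src = o'.src ∧ G.cmk S o.tgt = o'.tgt
      ∧ o'.src ≠ o'.tgt with hP
  refine ⟨fun o' => ∑ o : G.OEdge, if P o o' then f o else 0, ?_, ?_, ?_⟩
  · -- IsCurrent
    intro o'
    show (∑ o : G.OEdge, if P o o'.rev then f o else 0)
      = -(∑ o : G.OEdge, if P o o' then f o else 0)
    have h1 : ∀ o : G.OEdge, P o.rev o'.rev ↔ P o o' := by
      intro o
      constructor
      · rintro ⟨ha, hb, hc, hd⟩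
        exact ⟨ha, hc, hb, fun hcon => hd hcon.symm⟩
      · rintro ⟨ha, hb, hc, hd⟩
        exact ⟨ha, hc, hb, fun hcon => hd hcon.symm⟩
    calc (∑ o : G.OEdge, if P o o'.rev then f o else 0)
        = ∑ o : G.OEdge, (if P o.rev o'.rev then f o.rev else 0) :=
          (sum_rev (fun o => if P o o'.rev then f o else 0)).symm
      _ = ∑ o : G.OEdge, (if P o o' then - f o else 0) :=
          Finset.sum_congr rfl fun o _ => if_congr (h1 o) (hf o) rfl
      _ = -(∑ o : G.OEdge, if P o o' then f o else 0) := by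
          rw [← Finset.sum_neg_distrib]
          refine Finset.sum_congr rfl fun o _ => ?_
          split <;> simp
  · -- Consistency
    intro X
    show (∑ o' ∈ Finset.univ.filter (fun o' : (G.contract S).OEdge => o'.src = X),
      ∑ o : G.OEdge, if P o o' then f o else 0) = G.pushVec S D X
    rw [Finset.sum_comm]
    set Q : G.OEdge → Prop := fun o =>
      o.edge ∉ S ∧ G.cmk S o.src ≠ G.cmk S o.tgt ∧ G.cmk S o.src = X with hQ
    have hinner : ∀ o : G.OEdge,
        (∑ o' ∈ Finset.univ.filter (fun o' : (G.contract S).OEdge => o'.src = X),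
          if P o o' then f o else 0) = if Q o then f o else 0 := by
      intro o
      by_cases hQo : Q o
      · obtain ⟨h1, h2, h3⟩ := hQo
        have hpf : ((G.contract S).ends ⟨o.edge, h1⟩)
            = s(G.cmk S o.src, G.cmk S o.tgt) := by
          show Sym2.map _ (G.ends o.edge) = _
          rw [o.ends_eq]
          exact Sym2.map_pair_eq _ _ _
        set o'₀ : (G.contract S).OEdge :=
          ⟨(⟨o.edge, h1⟩, G.cmk S o.src, G.cmk S o.tgt), hpf⟩ with ho'₀
        have hmem : o'₀ ∈ Finset.univ.filter
            (fun o' : (G.contract S).OEdge => o'.src = X) :=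
          Finset.mem_filter.mpr ⟨Finset.mem_univ _, h3⟩
        rw [Finset.sum_eq_single_of_mem o'₀ hmem ?uniq]
        case uniq =>
          intro o' _ hne
          rw [if_neg]
          rintro ⟨ha, hb, hc, _⟩
          exact hne (OEdge.ext' (Subtype.ext ha.symm) hb.symm hc.symm)
        rw [if_pos ⟨rfl, rfl, rfl, h2⟩, if_pos ⟨h1, h2, h3⟩]
      · rw [if_neg hQo]
        refine Finset.sum_eq_zero fun o' ho' => ?_
        rw [if_neg]
        rintro ⟨ha, hb, hc, hd⟩
        refine hQo ⟨?_, ?_, ?_⟩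
        · rw [ha]
          exact o'.edge.2
        · rw [hb, hc]
          exact hd
        · rw [hb]
          exact (Finset.mem_filter.mp ho').2
    rw [Finset.sum_congr rfl fun o _ => hinner o]
    have hpush : G.pushVec S D X
        = ∑ o : G.OEdge, (if G.cmk S o.src = X then f o else 0) := by
      unfold pushVec
      rw [Finset.sum_filter]
      have hDx : ∀ x : G.V, (if G.cmk S x = X then D x else 0)
          = ∑ o ∈ Finset.univ.filter (fun o : G.OEdge => o.src = x),
              (if G.cmk S o.src = X then f o else 0) := by
        intro x
        rw [Finset.sum_congr rfl (fun o ho =>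
          by rw [(Finset.mem_filter.mp ho).2] :
          ∀ o ∈ Finset.univ.filter (fun o : G.OEdge => o.src = x),
            (if G.cmk S o.src = X then f o else 0) = if G.cmk S x = X then f o else 0)]
        by_cases h : G.cmk S x = X
        · rw [if_pos h, ← hcons x]
          exact (Finset.sum_congr rfl fun o _ => if_pos h).symm
        · rw [if_neg h]
          exact (Finset.sum_eq_zero fun o _ => if_neg h).symm
      rw [Finset.sum_congr rfl fun x _ => hDx x]
      exact Finset.sum_fiberwise Finset.univ (fun o : G.OEdge => o.src)
        (fun o => if G.cmk S o.src = X then f o else 0)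
    rw [hpush]
    set C : G.OEdge → Prop := fun o =>
      G.cmk S o.src = X ∧ (o.edge ∈ S ∨ G.cmk S o.src = G.cmk S o.tgt) with hC
    have hpt : ∀ o : G.OEdge, (if G.cmk S o.src = X then f o else 0)
        - (if Q o then f o else 0) = if C o then f o else 0 := by
      intro o
      by_cases h1 : G.cmk S o.src = X
      · by_cases h2 : Q o
        · rw [if_pos h1, if_pos h2, if_neg, sub_self]
          rintro ⟨-, hor⟩
          rcases hor with h | h
          · exact h2.1 h
          · exact h2.2.1 h
        · rw [if_pos h1, if_neg h2, sub_zero, if_pos]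
          constructor
          · exact h1
          · by_cases hS : o.edge ∈ S
            · exact Or.inl hS
            · right
              by_contra hne
              exact h2 ⟨hS, hne, h1⟩
      · rw [if_neg h1, if_neg (fun h : Q o => h1 h.2.2), if_neg
          (fun h : C o => h1 h.1), sub_self]
    have hCeq : ∀ o : G.OEdge, C o → G.cmk S o.src = G.cmk S o.tgt := by
      rintro o ⟨-, h | h⟩
      · exact adj_cmk h o.ends_eq
      · exact h
    have hCrev : ∀ o : G.OEdge, C o ↔ C o.rev := by
      intro o
      constructor
      · intro h
        refine ⟨?_, ?_⟩
        · show G.cmk S o.tgt = X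
          rw [← hCeq o h]
          exact h.1
        · show o.edge ∈ S ∨ G.cmk S o.tgt = G.cmk S o.src
          rcases h.2 with h2 | h2
          · exact Or.inl h2
          · exact Or.inr h2.symm
      · intro h
        have h' : G.cmk S o.rev.src = G.cmk S o.rev.tgt := hCeq o.rev h
        refine ⟨?_, ?_⟩
        · show G.cmk S o.src = X
          have : G.cmk S o.tgt = X := h.1
          rw [← this]
          exact h'.symm
        · rcases h.2 with h2 | h2
          · exact Or.inl h2
          · exact Or.inr h2.symm
    have hzero := sum_ite_rev_zero f hf C hCrev
    have hsub : ∑ o : G.OEdge, ((if G.cmk S o.src = X then f o else 0)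
        - (if Q o then f o else 0)) = 0 := by
      rw [Finset.sum_congr rfl fun o _ => hpt o]
      convert hzero using 2 with o
      congr 1
    rw [Finset.sum_sub_distrib] at hsub
    linarith
  · -- Power
    show (G.contract S).power (fun e' => μ (G.cval S e'))
        (fun o' => ∑ o : G.OEdge, if P o o' then f o else 0) ≤ G.power μ f
    unfold power
    rw [sum_contract_edges S (fun e' => μ (G.cval S e')
      * ((fun o' => ∑ o : G.OEdge, if P o o' then f o else 0)
          ((G.contract S).orient e')) ^ 2)]
    refine Finset.sum_le_sum fun e _ => ?_
    by_cases hS : e ∉ S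
    · rw [dif_pos hS]
      refine mul_le_mul_of_nonneg_left ?_ (hμ e)
      set o' := (G.contract S).orient ⟨e, hS⟩ with ho'def
      set o₀ := G.orient e with ho₀def
      have hcval : G.cval S o'.edge = e := by
        rw [ho'def, (G.contract S).orient_edge ⟨e, hS⟩]
        rfl
      have h0 : G.ends e = s(o₀.src, o₀.tgt) := by
        have := o₀.ends_eq
        rwa [ho₀def, G.orient_edge e] at this
      show (∑ o : G.OEdge, if P o o' then f o else 0) ^ 2 ≤ f o₀ ^ 2
      by_cases hl : o'.src = o'.tgt
      · have : (∑ o : G.OEdge, if P o o' then f o else 0) = 0 :=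
          Finset.sum_eq_zero fun o _ => if_neg (fun h => h.2.2.2 hl)
        rw [this]
        simpa using sq_nonneg (f o₀)
      · have hends : s(G.cmk S o₀.src, G.cmk S o₀.tgt) = s(o'.src, o'.tgt) := by
          have h1 := o'.ends_eq
          have h2 : (G.contract S).ends o'.edge
              = s(G.cmk S o₀.src, G.cmk S o₀.tgt) := by
            have h3 : o'.edge = ⟨e, hS⟩ := Subtype.ext hcval
            rw [h3]
            show Sym2.map _ (G.ends e) = _
            rw [h0]
            exact Sym2.map_pair_eq _ _ _
          rw [← h2, h1]
        rcases Sym2.eq_iff.mp hends with ⟨h1, h2⟩ | ⟨h1, h2⟩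
        · have hval : (∑ o : G.OEdge, if P o o' then f o else 0) = f o₀ := by
            rw [Finset.sum_eq_single_of_mem o₀ (Finset.mem_univ _) ?notmem]
            case notmem =>
              intro o _ hne
              rw [if_neg]
              rintro ⟨ha, hb, hc, -⟩
              rcases oedge_edge_cases e o (by rw [ha, hcval]) with ho | ho
              · exact hne ho
              · rw [ho] at hb hc
                simp only [OEdge.rev_src, OEdge.rev_tgt] at hb hc
                exact hl (by rw [← hb]; exact h2)
            exact if_pos ⟨by rw [hcval]; exact G.orient_edge e, h1, h2, hl⟩
          rw [hval]
        · have hval : (∑ o : G.OEdge, if P o o' then f o else 0) = - f o₀ := by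
            rw [Finset.sum_eq_single_of_mem o₀.rev (Finset.mem_univ _) ?notmem]
            case notmem =>
              intro o _ hne
              rw [if_neg]
              rintro ⟨ha, hb, hc, -⟩
              rcases oedge_edge_cases e o (by rw [ha, hcval]) with ho | ho
              · rw [ho] at hb hc
                exact hl (by rw [← hb]; exact h1)
              · exact hne ho
            rw [if_pos, hf o₀]
            refine ⟨by rw [hcval]; exact G.orient_edge e, ?_, ?_, hl⟩
            · show G.cmk S o₀.tgt = o'.src
              exact h2
            · show G.cmk S o₀.src = o'.tgt
              exact h1
          rw [hval, neg_pow]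
          simp
    · rw [dif_neg hS]
      exact mul_nonneg (hμ e) (sq_nonneg _)

end Graph'

namespace Graph'

variable {G : Graph'}

lemma isCurrent_add {f g : G.OEdge → ℝ} (hf : G.IsCurrent f) (hg : G.IsCurrent g) :
    G.IsCurrent (fun o => f o + g o) := fun o => by
  simp only [hf o, hg o]
  ring

lemma dvg_add (f g : G.OEdge → ℝ) (x : G.V) :
    dvg (fun o => f o + g o) x = dvg f x + dvg g x := by
  unfold dvg
  rw [← Finset.sum_add_distrib]

lemma contract_pos (μ : G.E → ℝ) (hμ : ∀ e, 0 ≤ μ e) :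
    ∀ e' : (G.contract {e : G.E | μ e = 0}).E,
      0 < μ (G.cval {e : G.E | μ e = 0} e') :=
  fun e' => lt_of_le_of_ne (hμ _) (fun h => e'.2 h.symm)

/-- Thomson lower bound for the extended Green's function. -/
lemma egreen_le_power (hG : G.Connected) (μ : G.E → ℝ) (hμ : ∀ e, 0 ≤ μ e)
    (D : G.V → ℝ) (hD : ∑ x : G.V, D x = 0) (f : G.OEdge → ℝ) (hf : G.IsCurrent f)
    (hcons : G.Consistent f D) : G.egreen μ D D ≤ G.power μ f := by
  classical
  set S : Set G.E := {e : G.E | μ e = 0} with hSdef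
  have hG' := contract_connected hG S
  have hμ' := contract_pos μ hμ
  have hD' : ∑ X : (G.contract S).V, G.pushVec S D X = 0 := by
    rw [sum_pushVec]
    exact hD
  obtain ⟨v', hv'⟩ := exists_lap_eq hG' (fun e' => μ (G.cval S e')) hμ'
    (G.pushVec S D) hD'
  obtain ⟨f', hf'c, hf'cons, hf'pow⟩ := push_current S μ hμ f hf D hcons
  have hge := green_eval hG' (fun e' => μ (G.cval S e')) hμ' (G.pushVec S D)
    (G.pushVec S D) v' hD' hv'
  have hle := sum_le_power (G := G.contract S) (fun e' => μ (G.cval S e')) hμ' v'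
    (G.pushVec S D) hv' f' hf'c hf'cons
  show (G.contract S).green (fun e' => μ (G.cval S e')) (G.pushVec S D)
    (G.pushVec S D) ≤ G.power μ f
  rw [hge]
  linarith

/-- The extended Green's function is attained by some current. -/
lemma egreen_attained (hG : G.Connected) (μ : G.E → ℝ) (hμ : ∀ e, 0 ≤ μ e)
    (D : G.V → ℝ) (hD : ∑ x : G.V, D x = 0) :
    ∃ f : G.OEdge → ℝ, G.IsCurrent f ∧ G.Consistent f D
      ∧ G.power μ f = G.egreen μ D D := by
  classical
  set S : Set G.E := {e : G.E | μ e = 0} with hSdef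
  have hG' := contract_connected hG S
  have hμ' := contract_pos μ hμ
  have hD' : ∑ X : (G.contract S).V, G.pushVec S D X = 0 := by
    rw [sum_pushVec]
    exact hD
  obtain ⟨w, hw⟩ := exists_lap_eq hG' (fun e' => μ (G.cval S e')) hμ'
    (G.pushVec S D) hD'
  have hlapin : ∀ X, G.pushVec S (G.lap μ (fun x => w (G.cmk S x))) X
      = G.pushVec S D X := fun X => by
    rw [← lap_contract S μ w X, hw]
  have hR0 : ∀ X, G.pushVec S
      (fun x => D x - G.lap μ (fun y => w (G.cmk S y)) x) X = 0 := fun X => by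
    rw [pushVec_sub, hlapin X, sub_self]
  obtain ⟨J, hJc, hJdvg, hJsupp⟩ := exists_flow S _ hR0
  set g : G.OEdge → ℝ := hcur μ (fun x => w (G.cmk S x)) with hgdef
  have hgc : G.IsCurrent g := hcur_isCurrent _ _
  refine ⟨fun o => g o + J o, isCurrent_add hgc hJc, ?_, ?_⟩
  · intro x
    show dvg (fun o => g o + J o) x = D x
    rw [dvg_add, hJdvg x, hgdef, dvg_hcur]
    ring
  · have hpow_add : G.power μ (fun o => g o + J o) = G.power μ g := by
      unfold power
      refine Finset.sum_congr rfl fun e _ => ?_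
      show μ e * (g (G.orient e) + J (G.orient e)) ^ 2 = μ e * g (G.orient e) ^ 2
      by_cases hSe : e ∈ S
      · rw [show μ e = 0 from hSe, zero_mul, zero_mul]
      · rw [show J (G.orient e) = 0 from
          hJsupp _ (by rw [G.orient_edge e]; exact hSe), add_zero]
    have hkey : ∀ o : G.OEdge, μ o.edge * g o
        = w (G.cmk S o.src) - w (G.cmk S o.tgt) := by
      intro o
      by_cases hz : μ o.edge = 0
      · have hqe : G.cmk S o.src = G.cmk S o.tgt := adj_cmk hz o.ends_eq
        rw [hz, zero_mul, hqe, sub_self]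
      · rw [hgdef]
        unfold hcur
        rw [mul_div_cancel₀ _ hz]
    have hp1 : G.power μ g = 2⁻¹ * ∑ o : G.OEdge, μ o.edge * g o ^ 2 :=
      power_eq_half μ g hgc
    have hp2 : ∑ o : G.OEdge, μ o.edge * g o ^ 2
        = ∑ o : G.OEdge, (w (G.cmk S o.src) - w (G.cmk S o.tgt)) * g o :=
      Finset.sum_congr rfl fun o _ => by rw [← hkey o]; ring
    have hp3 := pairing (fun x => w (G.cmk S x)) g hgc
    have hp4 : ∀ x, dvg g x = G.lap μ (fun y => w (G.cmk S y)) x := fun x => by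
      rw [hgdef]
      exact dvg_hcur μ _ x
    have hp5 : ∑ x : G.V, w (G.cmk S x) * dvg g x
        = ∑ X : (G.contract S).V, w X * G.pushVec S
            (G.lap μ (fun y => w (G.cmk S y))) X := by
      rw [sum_mul_pushVec]
      exact Finset.sum_congr rfl fun x _ => by rw [hp4 x]
    have hp6 : ∑ X : (G.contract S).V, w X * G.pushVec S
        (G.lap μ (fun y => w (G.cmk S y))) X
        = ∑ X : (G.contract S).V, G.pushVec S D X * w X := by
      refine Finset.sum_congr rfl fun X _ => ?_
      rw [hlapin X]
      ring
    have hge := green_eval hG' (fun e' => μ (G.cval S e')) hμ' (G.pushVec S D)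
      (G.pushVec S D) w hD' hw
    show G.power μ (fun o => g o + J o)
      = (G.contract S).green (fun e' => μ (G.cval S e')) (G.pushVec S D)
        (G.pushVec S D)
    rw [hpow_add, hge, hp1, hp2]
    have hsrc : ∑ o : G.OEdge, (w (G.cmk S o.src) - w (G.cmk S o.tgt)) * g o
        = 2 * ∑ x : G.V, w (G.cmk S x) * dvg g x := by
      rw [hp3]
      ring
    rw [hsrc, hp5, hp6]
    ring

end Graph'

namespace Graph'

variable {G : Graph'}

lemma green_zero_D {H : Graph'} (μ : H.E → ℝ) (D E : H.V → ℝ)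
    (hD0 : ∀ x, D x = 0) : H.green μ D E = 0 := by
  unfold green
  split
  · exact Finset.sum_eq_zero fun x _ => by rw [hD0 x, zero_mul]
  · rfl

lemma reach_mono {F F' : Set G.E} (h : ∀ e ∈ F, e ∈ F') {i j : G.V}
    (hr : G.Reach F i j) : G.Reach F' i j := by
  induction hr with
  | rel a b hab =>
    obtain ⟨e, he, hab⟩ := hab
    exact Relation.EqvGen.rel a b ⟨e, h e he, hab⟩
  | refl a => exact Relation.EqvGen.refl a
  | symm a b _ ih => exact Relation.EqvGen.symm a b ih
  | trans a b c _ _ ih1 ih2 => exact Relation.EqvGen.trans a b c ih1 ih2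

lemma pushVec_zero_all (hG : G.Connected) (S : Set G.E) (hS : ∀ e, e ∈ S)
    (D : G.V → ℝ) (hD : ∑ x : G.V, D x = 0) : ∀ X, G.pushVec S D X = 0 := by
  intro X
  obtain ⟨x₀, rfl⟩ := cmk_surjective S X
  have hall : ∀ x : G.V, G.cmk S x = G.cmk S x₀ := fun x =>
    reach_cmk_eq (reach_mono (fun e _ => hS e) (hG x x₀))
  unfold pushVec
  rw [Finset.filter_true_of_mem (fun x _ => hall x)]
  exact hD

lemma lap_scale {H : Graph'} (μ : H.E → ℝ) (a : ℝ) (ha : a ≠ 0) (v : H.V → ℝ) :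
    H.lap (fun e => a * μ e) (fun x => a * v x) = H.lap μ v := by
  funext i
  unfold lap
  refine Finset.sum_congr rfl fun j _ => Finset.sum_congr rfl fun e _ => ?_
  split
  · rw [← mul_sub, mul_div_mul_left _ _ ha]
  · rfl

lemma green_smul {H : Graph'} (hH : H.Connected) (μ : H.E → ℝ) (hμ : ∀ e, 0 < μ e)
    (a : ℝ) (ha : 0 < a) (D E : H.V → ℝ) (hD : ∑ x : H.V, D x = 0)
    (hE : ∑ x : H.V, E x = 0) :
    H.green (fun e => a * μ e) D E = a * H.green μ D E := by
  obtain ⟨v, hv⟩ := exists_lap_eq hH μ hμ E hE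
  have hv2 : H.lap (fun e => a * μ e) (fun x => a * v x) = E := by
    rw [lap_scale μ a ha.ne' v, hv]
  rw [green_eval hH _ (fun e => mul_pos ha (hμ e)) D E _ hD hv2,
    green_eval hH μ hμ D E v hD hv, Finset.mul_sum]
  exact Finset.sum_congr rfl fun x _ => by ring

end Graph'

theorem stmt17 (G : Graph') (hG : G.Connected) (D E : G.V → ℝ)
    (hD : ∑ x : G.V, D x = 0) (hE : ∑ x : G.V, E x = 0) :
    (∀ a : ℝ, 0 ≤ a → ∀ μ : G.E → ℝ, (∀ e : G.E, 0 ≤ μ e) →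
      G.egreen (fun e => a * μ e) D E = a * G.egreen μ D E) ∧
    (∀ (n : ℕ) (μ : Fin n → G.E → ℝ), (∀ (k : Fin n) (e : G.E), 0 ≤ μ k e) →
      ∑ k : Fin n, G.egreen (μ k) D D ≤ G.egreen (fun e => ∑ k : Fin n, μ k e) D D) ∧
    (∀ μ μ' : G.E → ℝ, (∀ e : G.E, 0 ≤ μ e) → (∀ e : G.E, 0 ≤ μ' e) →
      (∀ e : G.E, μ e ≤ μ' e) →
      G.egreen μ D D ≤ G.egreen μ' D D ∧
      (G.egreen μ D D = G.egreen μ' D D → (∀ e : G.E, 0 < μ' e) →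
        ∀ v' : G.V → ℝ, G.lap μ' v' = D →
          ∀ (e : G.E) (i j : G.V), G.ends e = s(i, j) → μ e = μ' e ∨ v' i = v' j)) := by
  classical
  refine ⟨?_, ?_, ?_⟩
  · -- (i) homogeneity
    intro a ha μ hμ
    rcases eq_or_lt_of_le ha with rfl | ha'
    · rw [zero_mul]
      exact Graph'.green_zero_D _ _ _
        (Graph'.pushVec_zero_all hG _ (fun e => by show (0:ℝ) * μ e = 0; rw [zero_mul])
          D hD)
    · have hset : {e : G.E | a * μ e = 0} = {e : G.E | μ e = 0} := by
        ext e
        simp [mul_eq_zero, ha'.ne']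
      unfold Graph'.egreen
      rw [hset]
      exact Graph'.green_smul (Graph'.contract_connected hG _)
        (fun e' => μ (G.cval _ e')) (Graph'.contract_pos μ hμ) a ha'
        (G.pushVec _ D) (G.pushVec _ E)
        (by rw [Graph'.sum_pushVec]; exact hD)
        (by rw [Graph'.sum_pushVec]; exact hE)
  · -- (ii) superadditivity
    intro n μs hμs
    have hmuSum : ∀ e, 0 ≤ ∑ k : Fin n, μs k e := fun e =>
      Finset.sum_nonneg fun k _ => hμs k e
    obtain ⟨f, hfc, hfcons, hfpow⟩ :=
      Graph'.egreen_attained hG (fun e => ∑ k : Fin n, μs k e) hmuSum D hD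
    calc ∑ k : Fin n, G.egreen (μs k) D D
        ≤ ∑ k : Fin n, G.power (μs k) f :=
          Finset.sum_le_sum fun k _ =>
            Graph'.egreen_le_power hG (μs k) (hμs k) D hD f hfc hfcons
      _ = G.power (fun e => ∑ k : Fin n, μs k e) f := by
          unfold Graph'.power
          rw [Finset.sum_comm]
          exact Finset.sum_congr rfl fun e _ => (Finset.sum_mul _ _ _).symm
      _ = G.egreen (fun e => ∑ k : Fin n, μs k e) D D := hfpow
  · -- (iii) monotonicity and equality case
    intro μ μ' hμ hμ' hle
    obtain ⟨f, hfc, hfcons, hfpow⟩ := Graph'.egreen_attained hG μ' hμ' D hD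
    have hfpow2 : G.power μ f ≤ G.power μ' f :=
      Finset.sum_le_sum fun e _ =>
        mul_le_mul_of_nonneg_right (hle e) (sq_nonneg _)
    have hmono : G.egreen μ D D ≤ G.egreen μ' D D := by
      have h1 := Graph'.egreen_le_power hG μ hμ D hD f hfc hfcons
      linarith
    refine ⟨hmono, ?_⟩
    intro heq hpos v' hv' e i j hij
    have hg'c := Graph'.hcur_isCurrent μ' v'
    have hg'cons : G.Consistent (Graph'.hcur μ' v') D := fun x => by
      show Graph'.dvg _ x = D x
      rw [Graph'.dvg_hcur, hv']
    have hph := Graph'.power_hcur μ' (fun e2 => (hpos e2).ne') v' D hv'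
    have h1 := Graph'.egreen_le_power hG μ hμ D hD (Graph'.hcur μ' v') hg'c hg'cons
    have h2 : G.power μ (Graph'.hcur μ' v') ≤ G.power μ' (Graph'.hcur μ' v') :=
      Finset.sum_le_sum fun e2 _ =>
        mul_le_mul_of_nonneg_right (hle e2) (sq_nonneg _)
    have h3 := Graph'.sum_le_power μ' hpos v' D hv' f hfc hfcons
    have hpe : G.power μ (Graph'.hcur μ' v') = G.power μ' (Graph'.hcur μ' v') := by
      have : G.power μ' (Graph'.hcur μ' v') ≤ G.egreen μ' D D := by
        rw [hph, ← hfpow]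
        exact h3
      have : G.egreen μ' D D ≤ G.power μ (Graph'.hcur μ' v') := by
        rw [← heq]
        exact h1
      linarith
    have hsum : ∑ e2 : G.E, (μ' e2 - μ e2)
        * (Graph'.hcur μ' v') (G.orient e2) ^ 2 = 0 := by
      have hexp : ∑ e2 : G.E, (μ' e2 - μ e2)
          * (Graph'.hcur μ' v') (G.orient e2) ^ 2
          = G.power μ' (Graph'.hcur μ' v') - G.power μ (Graph'.hcur μ' v') := by
        unfold Graph'.power
        rw [← Finset.sum_sub_distrib]
        exact Finset.sum_congr rfl fun e2 _ => by ring
      rw [hexp, hpe, sub_self]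
    have hterm := (Finset.sum_eq_zero_iff_of_nonneg (fun e2 _ =>
      mul_nonneg (by linarith [hle e2]) (sq_nonneg _))).mp hsum e (Finset.mem_univ e)
    rcases mul_eq_zero.mp hterm with h | h
    · left
      linarith
    · right
      have h0 : Graph'.hcur μ' v' (G.orient e) = 0 := by
        have := sq_eq_zero_iff.mp h
        exact this
      have hsub : v' (G.orient e).src - v' (G.orient e).tgt = 0 := by
        unfold Graph'.hcur at h0
        rcases div_eq_zero_iff.mp h0 with h4 | h4
        · exact h4
        · exact absurd h4 (hpos _).ne'
      have hends : s((G.orient e).src, (G.orient e).tgt) = s(i, j) := by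
        have h4 := (G.orient e).ends_eq
        rw [G.orient_edge e] at h4
        exact h4.symm.trans hij
      rcases Sym2.eq_iff.mp hends with ⟨ha, hb⟩ | ⟨ha, hb⟩
      · rw [← ha, ← hb]
        linarith
      · rw [← ha, ← hb]
        linarith
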